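/- Let d ≥ 1, let T ≥ 1 be an integer, let G, D > 0 and 0 < η ≤ 1/(5GD). Let 𝒟 ⊆ ℝ^d be a nonempty convex set of diameter at most D, let x_1,…,x_T ∈ 𝒟 and g_1,…,g_T ∈ ℝ^d with ‖g_t‖ ≤ G, and define s_t^η(x) = −η⟨x_t − x, g_t⟩ + η²G²‖x_t − x‖². Let y_1,…,y_{T+1} ∈ 𝒟 be a sequence such that for every t ∈ {1,…,T} and every u ∈ 𝒟, ‖y_{t+1} − u‖ ≤ ‖y_t − (1/(2η²G²t))(η g_t + 2η²G²(y_t − x_t)) − u‖ (a property satisfied when y_{t+1} is the Euclidean projection onto 𝒟 of the gradient-descent step y_t − (1/(2η²G²t))∇s_t^η(y_t)). Then for every u ∈ 𝒟: Σ_{t=1}^T s_t^η(y_t) − Σ_{t=1}^T s_t^η(u) ≤ 1 + ln T. -/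

import Mathlib

set_option maxHeartbeats 1000000 in
theorem strongly_convex_expert_regret
    (d T : ℕ) (hd : 1 ≤ d) (hT : 1 ≤ T)
    (G D η : ℝ) (hG : 0 < G) (hD : 0 < D) (hη0 : 0 < η) (hη : η ≤ 1 / (5 * G * D))
    (𝒟 : Set (EuclideanSpace ℝ (Fin d))) (hne : 𝒟.Nonempty) (hconv : Convex ℝ 𝒟)
    (hdiam : ∀ a ∈ 𝒟, ∀ b ∈ 𝒟, ‖a - b‖ ≤ D)
    (x g : ℕ → EuclideanSpace ℝ (Fin d))
    (hx : ∀ t ∈ Finset.Icc 1 T, x t ∈ 𝒟)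
    (hg : ∀ t ∈ Finset.Icc 1 T, ‖g t‖ ≤ G)
    (s : ℕ → EuclideanSpace ℝ (Fin d) → ℝ)
    (hs : ∀ t y, s t y = -η * (inner ℝ (x t - y) (g t) : ℝ) + η^2 * G^2 * ‖x t - y‖^2)
    (y : ℕ → EuclideanSpace ℝ (Fin d))
    (hy : ∀ t ∈ Finset.Icc 1 (T + 1), y t ∈ 𝒟)
    (hstep : ∀ t ∈ Finset.Icc 1 T, ∀ u ∈ 𝒟,
      ‖y (t + 1) - u‖ ≤
        ‖y t - (1 / (2 * η^2 * G^2 * t)) • (η • g t + (2 * η^2 * G^2) • (y t - x t)) - u‖) :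
    ∀ u ∈ 𝒟,
      (∑ t ∈ Finset.Icc 1 T, s t (y t)) - (∑ t ∈ Finset.Icc 1 T, s t u)
        ≤ 1 + Real.log T := by
  intro u hu
  set μ : ℝ := 2 * η^2 * G^2 with hμdef
  have hμ : 0 < μ := by positivity
  set F : ℕ → ℝ := fun n => (μ * n / 2) * ‖y (n+1) - u‖^2 with hF
  clear_value F μ
  -- per-step key inequality
  have key : ∀ n ∈ Finset.range T,
      s (n+1) (y (n+1)) - s (n+1) u
        ≤ F n - F (n+1) + (1/2) * ((n+1 : ℕ) : ℝ)⁻¹ := by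
    intro n hn
    have hnT : n + 1 ∈ Finset.Icc 1 T := by
      simp only [Finset.mem_range] at hn
      simp only [Finset.mem_Icc]; omega
    set t := n + 1 with htdef
    clear_value t
    have ht1n : 1 ≤ t := by omega
    have ht1 : (1 : ℝ) ≤ (t : ℝ) := by exact_mod_cast ht1n
    have htpos : (0 : ℝ) < (t : ℝ) := by linarith
    set w : EuclideanSpace ℝ (Fin d) := η • g t + μ • (y t - x t) with hw
    set α : ℝ := 1 / (μ * t) with hα
    clear_value w α
    have hαpos : 0 < α := by rw [hα]; exact one_div_pos.mpr (mul_pos hμ htpos)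
    -- (A) exact quadratic expansion
    have hA : s t (y t) - s t u
        = (inner ℝ w (y t - u) : ℝ) - (μ/2) * ‖y t - u‖^2 := by
      rw [hs, hs, hw, hμdef]
      simp only [inner_add_left, inner_add_right, inner_sub_left, inner_sub_right,
        real_inner_smul_left, real_inner_smul_right,
        ← real_inner_self_eq_norm_sq, real_inner_comm]
      ring
    -- (B) step inequality squared & expanded
    have hB : (inner ℝ w (y t - u) : ℝ)
        ≤ (μ * t / 2) * (‖y t - u‖^2 - ‖y (t+1) - u‖^2) + (α/2) * ‖w‖^2 := by
      have hst := hstep t hnT u hu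
      rw [← hα, ← hw] at hst
      have hsq : ‖y (t+1) - u‖^2 ≤ ‖(y t - u) - α • w‖^2 := by
        have heq : y t - α • w - u = (y t - u) - α • w := by abel
        rw [← heq]
        exact pow_le_pow_left₀ (norm_nonneg _) hst 2
      have hexp : ‖(y t - u) - α • w‖^2
          = ‖y t - u‖^2 - 2 * α * (inner ℝ w (y t - u) : ℝ) + α^2 * ‖w‖^2 := by
        rw [norm_sub_sq_real, real_inner_smul_right, norm_smul, mul_pow,
          Real.norm_eq_abs, sq_abs, real_inner_comm]
        ring
      rw [hexp] at hsq
      have hμt : (μ * t / 2) * (2 * α) = 1 := by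
        have hμt0 : μ * (t:ℝ) ≠ 0 := ne_of_gt (mul_pos hμ htpos)
        rw [hα]; field_simp
      -- from hsq: 2α⟨w,v⟩ ≤ ‖v‖² - ‖y(t+1)-u‖² + α²‖w‖²
      have h2 : 2 * α * (inner ℝ w (y t - u) : ℝ)
          ≤ ‖y t - u‖^2 - ‖y (t+1) - u‖^2 + α^2 * ‖w‖^2 := by linarith
      have h3 := mul_le_mul_of_nonneg_left h2 (by positivity : (0:ℝ) ≤ μ * t / 2)
      calc (inner ℝ w (y t - u) : ℝ)
          = (μ * t / 2) * (2 * α * (inner ℝ w (y t - u) : ℝ)) := by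
            rw [← mul_assoc, hμt, one_mul]
        _ ≤ (μ * t / 2) * (‖y t - u‖^2 - ‖y (t+1) - u‖^2 + α^2 * ‖w‖^2) := h3
        _ = (μ * t / 2) * (‖y t - u‖^2 - ‖y (t+1) - u‖^2) + (α/2) * ‖w‖^2 := by
            have hαsq : (μ * t / 2) * α^2 = α / 2 := by
              have hμt0 : μ * (t:ℝ) ≠ 0 := ne_of_gt (mul_pos hμ htpos)
              rw [hα]; field_simp
            linear_combination ‖w‖^2 * hαsq
    -- (C) gradient norm bound
    have hηGD : η * G * D ≤ 1/5 := by
      rw [le_div_iff₀ (by positivity : (0:ℝ) < 5 * G * D)] at hη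
      nlinarith
    have hwle : ‖w‖ ≤ (7/5) * (η * G) := by
      have h1 : ‖w‖ ≤ ‖η • g t‖ + ‖μ • (y t - x t)‖ := by
        rw [hw]; exact norm_add_le _ _
      have h2 : ‖η • g t‖ ≤ η * G := by
        rw [norm_smul, Real.norm_eq_abs, abs_of_pos hη0]
        exact mul_le_mul_of_nonneg_left (hg t hnT) hη0.le
      have h3 : ‖μ • (y t - x t)‖ ≤ μ * D := by
        rw [norm_smul, Real.norm_eq_abs, abs_of_pos hμ]
        refine mul_le_mul_of_nonneg_left ?_ hμ.le
        refine hdiam _ ?_ _ (hx t hnT)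
        exact hy t (by simp only [Finset.mem_Icc] at hnT ⊢; omega)
      have h4 : μ * D ≤ (2/5) * (η * G) := by
        rw [hμdef]
        nlinarith [mul_le_mul_of_nonneg_left hηGD (by positivity : (0:ℝ) ≤ 2*η*G)]
      linarith
    have hwsq : ‖w‖^2 ≤ (49/25) * (η*G)^2 := by
      nlinarith [norm_nonneg w]
    have hC : (α/2) * ‖w‖^2 ≤ (1/2) * ((t : ℕ) : ℝ)⁻¹ := by
      have hα2 : α / 2 = 1 / (2 * μ * t) := by rw [hα]; ring
      rw [hα2, hμdef]
      have key2 : (1 / (2 * (2 * η^2 * G^2) * t)) * ‖w‖^2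
          ≤ (1 / (2 * (2 * η^2 * G^2) * t)) * ((49/25) * (η*G)^2) := by
        apply mul_le_mul_of_nonneg_left hwsq (by positivity)
      refine key2.trans ?_
      rw [show (1 / (2 * (2 * η^2 * G^2) * t)) * ((49/25) * (η*G)^2)
          = (49/100) * ((t:ℝ))⁻¹ by field_simp; ring]
      have : (0:ℝ) ≤ ((t:ℝ))⁻¹ := by positivity
      push_cast
      nlinarith
    -- combine
    have hFn : F n = (μ * (t - 1) / 2) * ‖y t - u‖^2 := by
      rw [hF]
      push_cast [htdef]
      ring_nf
    have hFt : F t = (μ * t / 2) * ‖y (t+1) - u‖^2 := by rw [hF]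
    rw [hA, hFn, hFt]
    have := hB.trans (by linarith : (μ * t / 2) * (‖y t - u‖^2 - ‖y (t+1) - u‖^2) + (α/2) * ‖w‖^2
      ≤ (μ * t / 2) * (‖y t - u‖^2 - ‖y (t+1) - u‖^2) + (1/2) * ((t : ℕ) : ℝ)⁻¹)
    have hcast : ((t:ℝ) - 1) = ((n : ℕ) : ℝ) := by push_cast [htdef]; ring
    nlinarith [this]
  -- sum up
  have hsum : (∑ t ∈ Finset.Icc 1 T, s t (y t)) - (∑ t ∈ Finset.Icc 1 T, s t u)
      = ∑ n ∈ Finset.range T, (s (n+1) (y (n+1)) - s (n+1) u) := by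
    rw [← Finset.sum_sub_distrib]
    rw [← Finset.Ico_add_one_right_eq_Icc, Finset.sum_Ico_eq_sum_range]
    simp [add_comm 1]
  rw [hsum]
  have step1 : ∑ n ∈ Finset.range T, (s (n+1) (y (n+1)) - s (n+1) u)
      ≤ ∑ n ∈ Finset.range T, (F n - F (n+1) + (1/2) * ((n+1 : ℕ) : ℝ)⁻¹) :=
    Finset.sum_le_sum key
  have step2 : ∑ n ∈ Finset.range T, (F n - F (n+1) + (1/2) * ((n+1 : ℕ) : ℝ)⁻¹)
      = (F 0 - F T) + (1/2) * ∑ n ∈ Finset.range T, ((n+1 : ℕ) : ℝ)⁻¹ := by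
    rw [Finset.sum_add_distrib, Finset.sum_range_sub', Finset.mul_sum]
  have hF0 : F 0 = 0 := by simp [hF]
  have hFT : 0 ≤ F T := by rw [hF]; positivity
  have hharm : ∑ n ∈ Finset.range T, ((n+1 : ℕ) : ℝ)⁻¹ ≤ 1 + Real.log T := by
    have := harmonic_le_one_add_log T
    rw [harmonic] at this
    push_cast at this
    exact_mod_cast this
  have hlog : 0 ≤ Real.log T := Real.log_natCast_nonneg T
  have hhnn : 0 ≤ ∑ n ∈ Finset.range T, ((n+1 : ℕ) : ℝ)⁻¹ := by positivity
  calc ∑ n ∈ Finset.range T, (s (n+1) (y (n+1)) - s (n+1) u)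
      ≤ (F 0 - F T) + (1/2) * ∑ n ∈ Finset.range T, ((n+1 : ℕ) : ℝ)⁻¹ := by
        rw [← step2]; exact step1
    _ ≤ (1/2) * (1 + Real.log T) := by
        rw [hF0]
        nlinarith
    _ ≤ 1 + Real.log T := by nlinarith
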